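/- The discrete Fisher information I is strictly convex on the open probability simplex Δ°: for all ρ, ρ' ∈ Δ° with ρ ≠ ρ' and all θ ∈ (0,1), I(θρ + (1−θ)ρ') < θ I(ρ) + (1−θ) I(ρ'). -/

import Mathlib

/-- The discrete Fisher information on a graph:
`I(ρ) = Σ_{{i,j} ∈ E} (log ρ_i − log ρ_j)² (ρ_i + ρ_j)/2`,
where the sum runs over the edges of the graph, each unordered edge counted once. -/
noncomputable def discreteFisher {V : Type*} [Fintype V] [DecidableEq V]
    (G : SimpleGraph V) [DecidableRel G.Adj] (ρ : V → ℝ) : ℝ :=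
  ∑ e ∈ G.edgeFinset,
    Sym2.lift ⟨fun i j => (Real.log (ρ i) - Real.log (ρ j)) ^ 2 * (ρ i + ρ j) / 2,
      fun i j => by ring⟩ e

noncomputable def hh (x : ℝ) : ℝ := (Real.log x)^2 * (x+1)/2
noncomputable def hh1 (x : ℝ) : ℝ := Real.log x * (x+1) / x + (Real.log x)^2/2
noncomputable def hh2 (x : ℝ) : ℝ := 1/x + 1/x^2 + Real.log x * (x-1)/x^2

lemma hasDeriv_hh {x : ℝ} (hx : 0 < x) : HasDerivAt hh (hh1 x) x := by
  have L := Real.hasDerivAt_log (ne_of_gt hx)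
  have h := ((L.pow 2).mul ((hasDerivAt_id x).add_const 1)).div_const 2
  refine h.congr_deriv ?_
  unfold hh1
  simp only [id, Pi.pow_apply, Pi.mul_apply]
  field_simp
  ring

lemma hasDeriv_hh1 {x : ℝ} (hx : 0 < x) : HasDerivAt hh1 (hh2 x) x := by
  have L := Real.hasDerivAt_log (ne_of_gt hx)
  have h := ((L.mul ((hasDerivAt_id x).add_const 1)).div (hasDerivAt_id x) (ne_of_gt hx)).add
    ((L.pow 2).div_const 2)
  refine h.congr_deriv ?_
  unfold hh2
  simp only [id, Pi.pow_apply, Pi.mul_apply]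
  field_simp
  ring

lemma hh2_pos {x : ℝ} (hx : 0 < x) : 0 < hh2 x := by
  have h1 : 0 ≤ Real.log x * (x-1) := by
    rcases le_or_gt 1 x with h | h
    · exact mul_nonneg (Real.log_nonneg h) (by linarith)
    · exact mul_nonneg_of_nonpos_of_nonpos (Real.log_nonpos hx.le h.le) (by linarith)
  have h2 : 0 < 1/x + 1/x^2 := by positivity
  have h3 : 0 ≤ Real.log x * (x-1)/x^2 := by positivity
  unfold hh2; linarith

lemma strictConvex_hh : StrictConvexOn ℝ (Set.Ioi 0) hh := by
  apply strictConvexOn_of_deriv2_pos (convex_Ioi 0)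
  · apply ContinuousOn.div_const
    apply ContinuousOn.mul
    · exact (Real.continuousOn_log.mono (fun x hx => ne_of_gt hx)).pow 2
    · exact (continuousOn_id.add continuousOn_const)
  · intro x hx
    rw [interior_Ioi] at hx
    have e1 : deriv^[2] hh x = deriv (deriv hh) x := rfl
    have e2 : deriv hh =ᶠ[nhds x] hh1 := by
      filter_upwards [Ioi_mem_nhds hx] with y hy
      exact (hasDeriv_hh hy).deriv
    rw [e1, e2.deriv_eq, (hasDeriv_hh1 hx).deriv]
    exact hh2_pos hx


noncomputable def FF (a b : ℝ) : ℝ := (Real.log a - Real.log b)^2 * (a+b)/2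

lemma FF_eq {a b : ℝ} (ha : 0 < a) (hb : 0 < b) : FF a b = b * hh (a/b) := by
  unfold FF hh
  rw [Real.log_div (ne_of_gt ha) (ne_of_gt hb)]
  field_simp

lemma key_lemma {a b a' b' θ : ℝ} (ha : 0 < a) (hb : 0 < b) (ha' : 0 < a') (hb' : 0 < b')
    (hθ0 : 0 < θ) (hθ1 : θ < 1) :
    FF (θ*a+(1-θ)*a') (θ*b+(1-θ)*b') ≤ θ * FF a b + (1-θ) * FF a' b' ∧
    (a * b' ≠ a' * b → FF (θ*a+(1-θ)*a') (θ*b+(1-θ)*b') < θ * FF a b + (1-θ) * FF a' b') := by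
  set A := θ*a+(1-θ)*a' with hA
  set B := θ*b+(1-θ)*b' with hB
  have h1θ : 0 < 1 - θ := by linarith
  have hApos : 0 < A := by nlinarith [mul_pos hθ0 ha, mul_pos h1θ ha']
  have hBpos : 0 < B := by nlinarith [mul_pos hθ0 hb, mul_pos h1θ hb']
  set lam := θ*b/B with hlam
  have hlampos : 0 < lam := div_pos (mul_pos hθ0 hb) hBpos
  have hlam1 : 1 - lam = (1-θ)*b'/B := by rw [eq_div_iff hBpos.ne', hlam, sub_mul, div_mul_cancel₀ _ hBpos.ne', hB]; ring
  have hlam1pos : 0 < 1 - lam := by rw [hlam1]; exact div_pos (mul_pos h1θ hb') hBpos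
  have hpt : A / B = lam * (a/b) + (1-lam) * (a'/b') := by
    rw [hlam1, hlam]
    field_simp
    ring
  have hmem : a/b ∈ Set.Ioi (0:ℝ) := by simp [div_pos ha hb]
  have hmem' : a'/b' ∈ Set.Ioi (0:ℝ) := by simp [div_pos ha' hb']
  have hsum : lam + (1 - lam) = 1 := by ring
  have hrw : FF A B = B * hh (A/B) := FF_eq hApos hBpos
  have hrw1 : FF a b = b * hh (a/b) := FF_eq ha hb
  have hrw2 : FF a' b' = b' * hh (a'/b') := FF_eq ha' hb'
  have hrhs : θ * FF a b + (1-θ) * FF a' b'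
      = B * (lam * hh (a/b) + (1-lam) * hh (a'/b')) := by
    rw [hrw1, hrw2, hlam1, hlam]
    field_simp
  constructor
  · have := strictConvex_hh.convexOn.2 hmem hmem' hlampos.le hlam1pos.le hsum
    simp only [smul_eq_mul] at this
    rw [hrw, ← hpt] at *
    rw [hrhs]
    exact (mul_le_mul_iff_right₀ hBpos).mpr (by rw [hpt]; exact this)
  · intro hne
    have hxy : a/b ≠ a'/b' := by
      intro h
      exact hne (by field_simp at h; linarith [h])
    have := strictConvex_hh.2 hmem hmem' hxy hlampos hlam1pos hsum
    simp only [smul_eq_mul] at this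
    rw [hrw, hrhs]
    exact (mul_lt_mul_iff_right₀ hBpos).mpr (by rw [hpt]; exact this)

lemma ratio_walk {V : Type*} {G : SimpleGraph V} (r : V → ℝ)
    (hr : ∀ i j, G.Adj i j → r i = r j) : ∀ {i j : V}, G.Walk i j → r i = r j := by
  intro i j w
  induction w with
  | nil => rfl
  | cons h p ih => exact (hr _ _ h).trans ih




/-- The discrete Fisher information is strictly convex on the open probability simplex:
for `ρ ≠ ρ'` in the open simplex and `θ ∈ (0,1)`,
`I(θρ + (1−θ)ρ') < θ I(ρ) + (1−θ) I(ρ')` (for a connected graph). -/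
theorem fisher_strictly_convex {V : Type*} [Fintype V] [DecidableEq V] [Nonempty V]
    (G : SimpleGraph V) [DecidableRel G.Adj] (hG : G.Connected)
    (ρ ρ' : V → ℝ)
    (hρpos : ∀ i, 0 < ρ i) (hρsum : ∑ i, ρ i = 1)
    (hρ'pos : ∀ i, 0 < ρ' i) (hρ'sum : ∑ i, ρ' i = 1)
    (hne : ρ ≠ ρ') (θ : ℝ) (hθ0 : 0 < θ) (hθ1 : θ < 1) :
    discreteFisher G (fun i => θ * ρ i + (1 - θ) * ρ' i) <
      θ * discreteFisher G ρ + (1 - θ) * discreteFisher G ρ' := by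
  -- find a "non-proportional" edge
  have hexists : ∃ i j, G.Adj i j ∧ ρ i * ρ' j ≠ ρ' i * ρ j := by
    by_contra hcon
    push_neg at hcon
    have hr : ∀ i j, G.Adj i j → ρ i / ρ' i = ρ j / ρ' j := by
      intro i j hij
      rw [div_eq_div_iff (ne_of_gt (hρ'pos i)) (ne_of_gt (hρ'pos j))]
      have := hcon i j hij
      linarith [this]
    have hall : ∀ i j : V, ρ i / ρ' i = ρ j / ρ' j := by
      intro i j
      obtain ⟨w⟩ := hG.preconnected i j
      exact ratio_walk (fun i => ρ i / ρ' i) hr w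
    obtain ⟨i0⟩ := ‹Nonempty V›
    set c := ρ i0 / ρ' i0 with hc
    have heq : ∀ i, ρ i = c * ρ' i := by
      intro i
      exact (div_eq_iff (ne_of_gt (hρ'pos i))).mp (hall i i0)
    have : (1:ℝ) = c := by
      calc (1:ℝ) = ∑ i, ρ i := hρsum.symm
        _ = ∑ i, c * ρ' i := Finset.sum_congr rfl (fun i _ => heq i)
        _ = c * ∑ i, ρ' i := (Finset.mul_sum _ _ _).symm
        _ = c := by rw [hρ'sum, mul_one]
    exact hne (funext fun i => by rw [heq i, ← this, one_mul])
  obtain ⟨i, j, hadj, hprop⟩ := hexists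
  -- set up the sum comparison
  unfold discreteFisher
  rw [Finset.mul_sum, Finset.mul_sum, ← Finset.sum_add_distrib]
  apply Finset.sum_lt_sum
  · intro e he
    induction e using Sym2.ind with
    | _ a b =>
      simp only [Sym2.lift_mk]
      exact (key_lemma (hρpos a) (hρpos b) (hρ'pos a) (hρ'pos b) hθ0 hθ1).1
  · refine ⟨s(i,j), ?_, ?_⟩
    · rw [SimpleGraph.mem_edgeFinset]
      exact hadj
    · simp only [Sym2.lift_mk]
      exact (key_lemma (hρpos i) (hρpos j) (hρ'pos i) (hρ'pos j) hθ0 hθ1).2 hprop
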